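/- (Symmetric form of the projector G₊ = Ĩ∘W∘E⁻¹.) For every integrable h : α → ℝ and every x ∈ α, the average-free part of W·(E⁻¹ h) at x equals (G₊ h)(x); that is, W(x)·(E⁻¹ h)(x) − ⟨W·(E⁻¹ h)⟩ = W(x)·h(x) − W(x)·(∫ W·h dμ)/(∫ W dμ). -/

import Mathlib

open MeasureTheory

/-- Total (coordinate) volume `V := μ(α)` as a real number. -/
noncomputable def totalVol {α : Type*} [MeasurableSpace α] (μ : Measure α) : ℝ :=
  (μ Set.univ).toReal

/-- Spatial average `⟨f⟩ := (1/V) ∫ f dμ`. -/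
noncomputable def avg {α : Type*} [MeasurableSpace α] (μ : Measure α) (f : α → ℝ) : ℝ :=
  (totalVol μ)⁻¹ * ∫ x, f x ∂μ

/-- The delocalization operator `E`:
`(E g)(x) = g(x) + ⟨g⟩ − W(x)⁻¹ ⟨W·g⟩`. -/
noncomputable def opE {α : Type*} [MeasurableSpace α] (μ : Measure α) (W : α → ℝ)
    (g : α → ℝ) : α → ℝ :=
  fun x => g x + avg μ g - (W x)⁻¹ * avg μ (fun y => W y * g y)

/-- The operator `E⁻¹`:
`(E⁻¹ h)(x) = h(x) − W(x)⁻¹ (∫h)/(∫W⁻¹) − (∫W·h)/(∫W) + 2 W(x)⁻¹ V (∫W·h)/((∫W⁻¹)(∫W))`. -/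
noncomputable def opEinv {α : Type*} [MeasurableSpace α] (μ : Measure α) (W : α → ℝ)
    (h : α → ℝ) : α → ℝ :=
  fun x => h x
    - (W x)⁻¹ * (∫ y, h y ∂μ) / (∫ y, (W y)⁻¹ ∂μ)
    - (∫ y, W y * h y ∂μ) / (∫ y, W y ∂μ)
    + 2 * (W x)⁻¹ * totalVol μ * (∫ y, W y * h y ∂μ)
        / ((∫ y, (W y)⁻¹ ∂μ) * (∫ y, W y ∂μ))

/-- The projector-type operator `G₊`:
`(G₊ h)(x) = W(x)·h(x) − W(x)·(∫W·h)/(∫W)`. -/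
noncomputable def opGplus {α : Type*} [MeasurableSpace α] (μ : Measure α) (W : α → ℝ)
    (h : α → ℝ) : α → ℝ :=
  fun x => W x * h x - W x * (∫ y, W y * h y ∂μ) / (∫ y, W y ∂μ)

/-- The projector-type operator `G₋`:
`(G₋ h)(x) = W(x)⁻¹·h(x) − W(x)⁻¹·(∫W⁻¹·h)/(∫W⁻¹)`. -/
noncomputable def opGminus {α : Type*} [MeasurableSpace α] (μ : Measure α) (W : α → ℝ)
    (h : α → ℝ) : α → ℝ :=
  fun x => (W x)⁻¹ * h x - (W x)⁻¹ * (∫ y, (W y)⁻¹ * h y ∂μ) / (∫ y, (W y)⁻¹ ∂μ)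

/-- Symmetric form of the projector `G₊ = Ĩ∘W∘E⁻¹`.
For every integrable `h` and every `x`, the average-free part of `W·(E⁻¹ h)` at `x`
equals `(G₊ h)(x)`:
`W(x)·(E⁻¹ h)(x) − ⟨W·(E⁻¹ h)⟩ = W(x)·h(x) − W(x)·(∫ W·h dμ)/(∫ W dμ)`. -/
theorem opGplus_symmetric_form
    {α : Type*} [MeasurableSpace α] (μ : Measure α) [IsFiniteMeasure μ]
    (hV : 0 < totalVol μ)
    (W : α → ℝ) (hW : Measurable W)
    (c C : ℝ) (hc : 0 < c) (hcC : c ≤ C)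
    (hbound : ∀ x, c ≤ W x ∧ W x ≤ C) :
    ∀ h : α → ℝ, Integrable h μ → ∀ x,
      W x * opEinv μ W h x - avg μ (fun y => W y * opEinv μ W h y)
        = W x * h x - W x * (∫ y, W y * h y ∂μ) / (∫ y, W y ∂μ) := by
  intro h hh x
  have hV0 : totalVol μ ≠ 0 := ne_of_gt hV
  have hWpos : ∀ y, 0 < W y := fun y => lt_of_lt_of_le hc (hbound y).1
  have hWne : ∀ y, W y ≠ 0 := fun y => (hWpos y).ne'
  have hCpos : 0 < C := lt_of_lt_of_le hc hcC
  have hWbd : ∀ y, ‖W y‖ ≤ C := fun y => by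
    rw [Real.norm_eq_abs, abs_of_pos (hWpos y)]; exact (hbound y).2
  have hWinvbd : ∀ y, ‖(W y)⁻¹‖ ≤ c⁻¹ := fun y => by
    rw [Real.norm_eq_abs, abs_of_pos (inv_pos.mpr (hWpos y))]
    exact inv_anti₀ hc (hbound y).1
  have hWint : Integrable W μ :=
    ⟨hW.aestronglyMeasurable, HasFiniteIntegral.of_bounded (C := C)
      (Filter.Eventually.of_forall hWbd)⟩
  have hWinvint : Integrable (fun y => (W y)⁻¹) μ :=
    ⟨(hW.inv).aestronglyMeasurable, HasFiniteIntegral.of_bounded (C := c⁻¹)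
      (Filter.Eventually.of_forall hWinvbd)⟩
  have hWhint : Integrable (fun y => W y * h y) μ :=
    hh.bdd_mul hW.aestronglyMeasurable (Filter.Eventually.of_forall hWbd)
  set A := ∫ y, h y ∂μ with hA
  set B := ∫ y, W y * h y ∂μ with hB
  set Im := ∫ y, (W y)⁻¹ ∂μ with hIm
  set Ip := ∫ y, W y ∂μ with hIp
  set V := totalVol μ with hVdef
  -- positivity of the integrals
  have hIp0 : 0 < Ip := by
    have h1 : ∫ y, c ∂μ ≤ Ip := integral_mono (integrable_const c) hWint
      (fun y => (hbound y).1)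
    have h2 : ∫ y, c ∂μ = V * c := by
      rw [integral_const]; simp [hVdef, totalVol, smul_eq_mul, Measure.real]
    calc (0:ℝ) < V * c := mul_pos hV hc
    _ = ∫ y, c ∂μ := h2.symm
    _ ≤ Ip := h1
  have hIm0 : 0 < Im := by
    have h1 : ∫ y, C⁻¹ ∂μ ≤ Im := integral_mono (integrable_const C⁻¹) hWinvint
      (fun y => inv_anti₀ (hWpos y) (hbound y).2)
    have h2 : ∫ y, C⁻¹ ∂μ = V * C⁻¹ := by
      rw [integral_const]; simp [hVdef, totalVol, smul_eq_mul, Measure.real]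
    calc (0:ℝ) < V * C⁻¹ := mul_pos hV (inv_pos.mpr hCpos)
    _ = ∫ y, C⁻¹ ∂μ := h2.symm
    _ ≤ Im := h1
  have hIpne : Ip ≠ 0 := hIp0.ne'
  have hImne : Im ≠ 0 := hIm0.ne'
  -- rewrite the integrand
  have hkey : (fun y => W y * opEinv μ W h y)
      = fun y => (W y * h y - A / Im - W y * (B / Ip)) + 2 * V * B / (Im * Ip) := by
    funext y
    simp only [opEinv, ← hA, ← hB, ← hIm, ← hIp, ← hVdef]
    field_simp [hWne y]
  have hint : ∫ y, W y * opEinv μ W h y ∂μ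
      = B - V * (A / Im) - Ip * (B / Ip) + V * (2 * V * B / (Im * Ip)) := by
    rw [hkey]
    have i1 : Integrable (fun y => W y * h y - A / Im) μ :=
      hWhint.sub (integrable_const _)
    have i2 : Integrable (fun y => W y * (B / Ip)) μ := hWint.mul_const _
    have i12 : Integrable (fun y => W y * h y - A / Im - W y * (B / Ip)) μ := i1.sub i2
    rw [integral_add i12 (integrable_const _), integral_sub i1 i2,
      integral_sub hWhint (integrable_const _), integral_const, integral_const,
      integral_mul_const]
    simp [hVdef, totalVol, smul_eq_mul, ← hB, ← hIp, Measure.real]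
  -- now unfold and compute
  have havg : avg μ (fun y => W y * opEinv μ W h y)
      = -(A / Im) + 2 * V * B / (Im * Ip) := by
    rw [avg, hint, ← hVdef]
    field_simp
    ring
  rw [havg, congrFun hkey x]
  ring
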